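/- arXiv:2312.09709 — 2 statements merged into one kernel-verified Lean document; each statement's English description precedes it below -/
import Mathlib

section
/- If M (of size m × p) and N (of size m × q) are real matrices that are column-wise orthogonal, i.e., MᵀN = 0, then the nuclear norm of the column-wise concatenation equals the sum of the nuclear norms: ‖[M, N]‖_* = ‖M‖_* + ‖N‖_*. -/
open Matrix Polynomial

/-- The nuclear norm of a real matrix `A`: the sum of its singular values, i.e. the sum of the
square roots of the eigenvalues of the positive semidefinite symmetric matrix `Aᵀ * A`. -/
noncomputable def nuclearNorm {m n : Type*} [Fintype m] [Fintype n] [DecidableEq n]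
    (A : Matrix m n ℝ) : ℝ :=
  ∑ i, Real.sqrt ((Matrix.isHermitian_conjTranspose_mul_self A).eigenvalues i)

section aux

variable {n : Type*} [Fintype n] [DecidableEq n]

lemma charpoly_diagonal' (d : n → ℝ) :
    (Matrix.diagonal d).charpoly = ∏ i, (X - C (d i)) := by
  rw [Matrix.charpoly, Matrix.charmatrix]
  have h1 : C.mapMatrix (Matrix.diagonal d) = Matrix.diagonal (fun i => C (d i)) := by
    rw [RingHom.mapMatrix_apply]
    exact Matrix.diagonal_map (by simp)
  rw [h1, Matrix.scalar_apply, Matrix.diagonal_sub, Matrix.det_diagonal]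

lemma charpoly_conj' (U V A : Matrix n n ℝ) (hUV : U * V = 1) (hVU : V * U = 1) :
    (U * A * V).charpoly = A.charpoly := by
  have key : Matrix.charmatrix (U * A * V) =
      C.mapMatrix U * Matrix.charmatrix A * C.mapMatrix V := by
    rw [Matrix.charmatrix, Matrix.charmatrix, mul_sub, sub_mul]
    congr 1
    · have hc : Commute (Matrix.scalar n (X : ℝ[X])) (C.mapMatrix U) :=
        Matrix.scalar_commute _ (fun r' => Commute.all _ _) _
      rw [← hc.eq, mul_assoc, ← _root_.map_mul C.mapMatrix U V, hUV]
      simp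
    · rw [_root_.map_mul, _root_.map_mul]
  rw [Matrix.charpoly, key, Matrix.det_mul, Matrix.det_mul, Matrix.charpoly,
    mul_comm ((C.mapMatrix U).det), mul_assoc, ← Matrix.det_mul,
    ← _root_.map_mul C.mapMatrix U V, hUV]
  simp

lemma charpoly_eq_prod_eigenvalues {A : Matrix n n ℝ} (hA : A.IsHermitian) :
    A.charpoly = ∏ i, (X - C (hA.eigenvalues i)) := by
  have hU : (hA.eigenvectorUnitary : Matrix n n ℝ) ∈ Matrix.unitaryGroup n ℝ :=
    hA.eigenvectorUnitary.2
  have h1 : (hA.eigenvectorUnitary : Matrix n n ℝ) * star (hA.eigenvectorUnitary : Matrix n n ℝ)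
      = 1 := (Matrix.mem_unitaryGroup_iff).mp hU
  have h2 : star (hA.eigenvectorUnitary : Matrix n n ℝ) * (hA.eigenvectorUnitary : Matrix n n ℝ)
      = 1 := (Matrix.mem_unitaryGroup_iff').mp hU
  calc A.charpoly
      = ((hA.eigenvectorUnitary : Matrix n n ℝ)
          * Matrix.diagonal (RCLike.ofReal ∘ hA.eigenvalues)
          * star (hA.eigenvectorUnitary : Matrix n n ℝ)).charpoly := by
        rw [← Unitary.conjStarAlgAut_apply (S := ℝ), ← hA.spectral_theorem]
    _ = (Matrix.diagonal (RCLike.ofReal ∘ hA.eigenvalues)).charpoly :=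
        charpoly_conj' _ _ _ h1 h2
    _ = ∏ i, (X - C (hA.eigenvalues i)) := by
        rw [charpoly_diagonal']
        simp [RCLike.ofReal_real_eq_id]

lemma eigenvalues_multiset_eq {A : Matrix n n ℝ} (hA : A.IsHermitian) :
    A.charpoly.roots = Finset.univ.val.map hA.eigenvalues := by
  rw [charpoly_eq_prod_eigenvalues hA]
  have : (∏ i, (X - C (hA.eigenvalues i)))
      = ((Finset.univ.val.map hA.eigenvalues).map fun a => X - C a).prod := by
    rw [Multiset.map_map]
    rfl
  rw [this, Polynomial.roots_multiset_prod_X_sub_C]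

end aux

/-- If `M` and `N` are column-wise orthogonal, i.e. `Mᵀ * N = 0`, then the nuclear norm of the
column-wise concatenation `[M, N]` equals the sum of the nuclear norms of `M` and `N`. -/
theorem nuclearNorm_fromColumns_of_orthogonal {m p q : Type*} [Fintype m] [Fintype p] [Fintype q]
    [DecidableEq p] [DecidableEq q] (M : Matrix m p ℝ) (N : Matrix m q ℝ)
    (h : Mᵀ * N = 0) :
    nuclearNorm (Matrix.fromCols M N) = nuclearNorm M + nuclearNorm N := by
  classical
  set A := Matrix.fromCols M N
  have hblock : Aᵀ * A = Matrix.fromBlocks (Mᵀ * M) 0 0 (Nᵀ * N) := by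
    have h' : Nᵀ * M = 0 := by
      have := congrArg Matrix.transpose h
      simpa [Matrix.transpose_mul] using this
    rw [show Aᵀ = Matrix.fromRows Mᵀ Nᵀ from Matrix.transpose_fromCols M N,
      Matrix.fromRows_mul_fromCols, h, h']
  have hchar : (Aᴴ * A).charpoly = (Mᴴ * M).charpoly * (Nᴴ * N).charpoly := by
    rw [Matrix.conjTranspose_eq_transpose_of_trivial, Matrix.conjTranspose_eq_transpose_of_trivial,
      Matrix.conjTranspose_eq_transpose_of_trivial, hblock, Matrix.charpoly_fromBlocks_zero₁₂]
  set hBig := Matrix.isHermitian_conjTranspose_mul_self A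
  set hM := Matrix.isHermitian_conjTranspose_mul_self M
  set hN := Matrix.isHermitian_conjTranspose_mul_self N
  have hroots : (Finset.univ.val.map hBig.eigenvalues)
      = Finset.univ.val.map hM.eigenvalues + Finset.univ.val.map hN.eigenvalues := by
    rw [← eigenvalues_multiset_eq hBig, ← eigenvalues_multiset_eq hM,
      ← eigenvalues_multiset_eq hN, hchar, Polynomial.roots_mul]
    exact mul_ne_zero (Matrix.charpoly_monic _).ne_zero (Matrix.charpoly_monic _).ne_zero
  have key : ((Finset.univ.val.map hBig.eigenvalues).map Real.sqrt).sum
      = ((Finset.univ.val.map hM.eigenvalues).map Real.sqrt).sum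
        + ((Finset.univ.val.map hN.eigenvalues).map Real.sqrt).sum := by
    rw [hroots, Multiset.map_add, Multiset.sum_add]
  simp only [Multiset.map_map, Function.comp] at key
  rw [nuclearNorm, nuclearNorm, nuclearNorm, Finset.sum, Finset.sum, Finset.sum]
  exact key
end

section
/- Let X be a real matrix whose columns are partitioned into finitely many blocks X_1, …, X_V (so X is the column-wise concatenation [X_1, X_2, …, X_V]). Then the sum of the nuclear norms of the blocks is at least the nuclear norm of the full matrix: ∑_{v=1}^{V} ‖X_v‖_* − ‖X‖_* ≥ 0. -/
open Matrix

/-- Cauchy–Schwarz for `dotProduct` over `ℝ`. -/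
lemma dotProduct_le_sqrt_mul_sqrt {n : Type*} [Fintype n] (a b : n → ℝ) :
    a ⬝ᵥ b ≤ Real.sqrt (a ⬝ᵥ a) * Real.sqrt (b ⬝ᵥ b) := by
  have h := Finset.sum_mul_sq_le_sq_mul_sq Finset.univ a b
  calc a ⬝ᵥ b ≤ |a ⬝ᵥ b| := le_abs_self _
    _ = Real.sqrt ((a ⬝ᵥ b) ^ 2) := (Real.sqrt_sq_eq_abs _).symm
    _ ≤ Real.sqrt ((a ⬝ᵥ a) * (b ⬝ᵥ b)) := by
        apply Real.sqrt_le_sqrt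
        simpa [dotProduct, pow_two] using h
    _ = _ := Real.sqrt_mul (Finset.sum_nonneg fun i _ => mul_self_nonneg _) _

lemma dot_self_mulVec {m n : Type*} [Fintype m] [Fintype n] (M : Matrix m n ℝ) (x : n → ℝ) :
    (M *ᵥ x) ⬝ᵥ (M *ᵥ x) = x ⬝ᵥ ((Mᵀ * M) *ᵥ x) := by
  rw [← Matrix.mulVec_mulVec, Matrix.dotProduct_mulVec x Mᵀ, Matrix.vecMul_transpose]

lemma star_eq_transpose_real {n : Type*} (M : Matrix n n ℝ) : star M = Mᵀ :=
  Matrix.conjTranspose_eq_transpose_of_trivial M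

/-- Key duality bound: if `Q` is a contraction then `trace (Qᵀ A) ≤ ‖A‖_*`. -/
lemma trace_transpose_mul_le_nuclearNorm0 {m n : Type*} [Fintype m] [Fintype n] [DecidableEq n]
    (A Q : Matrix m n ℝ) (hQ : ∀ x : n → ℝ, (Q *ᵥ x) ⬝ᵥ (Q *ᵥ x) ≤ x ⬝ᵥ x) :
    (Qᵀ * A).trace ≤ ∑ i, Real.sqrt ((Matrix.isHermitian_conjTranspose_mul_self A).eigenvalues i) := by
  set h := Matrix.isHermitian_conjTranspose_mul_self A with hh
  set U : Matrix n n ℝ := (h.eigenvectorUnitary : Matrix n n ℝ) with hU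
  have hU1 : U * Uᵀ = 1 := by
    rw [← star_eq_transpose_real]
    exact Matrix.mem_unitaryGroup_iff.mp h.eigenvectorUnitary.2
  have hU2 : Uᵀ * U = 1 := by
    rw [← star_eq_transpose_real]
    exact Matrix.mem_unitaryGroup_iff'.mp h.eigenvectorUnitary.2
  have htr : (Qᵀ * A).trace = ((Q * U)ᵀ * (A * U)).trace := by
    rw [Matrix.transpose_mul, Matrix.mul_assoc Uᵀ Qᵀ (A * U), ← Matrix.mul_assoc Qᵀ A U,
      Matrix.trace_mul_comm Uᵀ (Qᵀ * A * U), Matrix.mul_assoc (Qᵀ * A) U Uᵀ, hU1,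
      Matrix.mul_one]
  rw [htr, Matrix.trace]
  apply Finset.sum_le_sum
  intro j _
  set u : n → ℝ := fun k => U k j with hu
  have hdiag : ((Q * U)ᵀ * (A * U)).diag j = (Q *ᵥ u) ⬝ᵥ (A *ᵥ u) := by
    simp only [Matrix.diag_apply, Matrix.mul_apply, Matrix.transpose_apply, dotProduct]
    exact Finset.sum_congr rfl fun i _ => by
      simp [Matrix.mul_apply, Matrix.mulVec, dotProduct, hu]
  rw [hdiag]
  -- the column u is the j-th eigenvector
  have hu_eig : u = ⇑(h.eigenvectorBasis j) := by
    funext k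
    simpa [hu, hU] using Matrix.IsHermitian.eigenvectorUnitary_apply h k j
  have hunit : u ⬝ᵥ u = 1 := by
    have : (Uᵀ * U) j j = (1 : Matrix n n ℝ) j j := by rw [hU2]
    simpa [Matrix.mul_apply, Matrix.transpose_apply, dotProduct,
      Matrix.one_apply] using this
  have heig : (A *ᵥ u) ⬝ᵥ (A *ᵥ u) = h.eigenvalues j := by
    rw [dot_self_mulVec]
    have : (Aᵀ * A) *ᵥ u = h.eigenvalues j • u := by
      rw [hu_eig]; exact h.mulVec_eigenvectorBasis j
    rw [this, dotProduct_smul, smul_eq_mul, hunit, mul_one]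
  calc (Q *ᵥ u) ⬝ᵥ (A *ᵥ u)
      ≤ Real.sqrt ((Q *ᵥ u) ⬝ᵥ (Q *ᵥ u)) * Real.sqrt ((A *ᵥ u) ⬝ᵥ (A *ᵥ u)) :=
        dotProduct_le_sqrt_mul_sqrt _ _
    _ ≤ 1 * Real.sqrt (h.eigenvalues j) := by
        rw [heig]
        have h1 : Real.sqrt ((Q *ᵥ u) ⬝ᵥ (Q *ᵥ u)) ≤ 1 := by
          calc Real.sqrt ((Q *ᵥ u) ⬝ᵥ (Q *ᵥ u)) ≤ Real.sqrt (u ⬝ᵥ u) :=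
              Real.sqrt_le_sqrt (hQ u)
            _ = 1 := by rw [hunit, Real.sqrt_one]
        exact mul_le_mul_of_nonneg_right h1 (Real.sqrt_nonneg _)
    _ = Real.sqrt (h.eigenvalues j) := one_mul _

lemma conj_conj {n : Type*} [Fintype n] [DecidableEq n] (U : Matrix n n ℝ)
    (hU2 : Uᵀ * U = 1) (a b : n → ℝ) :
    (U * Matrix.diagonal a * Uᵀ) * (U * Matrix.diagonal b * Uᵀ)
      = U * Matrix.diagonal (fun i => a i * b i) * Uᵀ := by
  have hUZ : ∀ Z : Matrix n n ℝ, Uᵀ * (U * Z) = Z := fun Z => by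
    rw [← Matrix.mul_assoc, hU2, Matrix.one_mul]
  simp only [Matrix.mul_assoc]
  rw [hUZ, ← Matrix.mul_assoc (Matrix.diagonal a), Matrix.diagonal_mul_diagonal]

lemma exists_dual {m n : Type*} [Fintype m] [Fintype n] [DecidableEq n] (X : Matrix m n ℝ) :
    ∃ Q : Matrix m n ℝ, (∀ x : n → ℝ, (Q *ᵥ x) ⬝ᵥ (Q *ᵥ x) ≤ x ⬝ᵥ x) ∧
      (Qᵀ * X).trace
        = ∑ i, Real.sqrt ((Matrix.isHermitian_conjTranspose_mul_self X).eigenvalues i) := by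
  set h := Matrix.isHermitian_conjTranspose_mul_self X with hh
  set U : Matrix n n ℝ := (h.eigenvectorUnitary : Matrix n n ℝ) with hU
  have hU1 : U * Uᵀ = 1 := by
    rw [← star_eq_transpose_real]; exact Matrix.mem_unitaryGroup_iff.mp h.eigenvectorUnitary.2
  have hU2 : Uᵀ * U = 1 := by
    rw [← star_eq_transpose_real]; exact Matrix.mem_unitaryGroup_iff'.mp h.eigenvectorUnitary.2
  have hps : (Xᵀ * X).PosSemidef := by
    rw [← Matrix.conjTranspose_eq_transpose_of_trivial]
    exact Matrix.posSemidef_conjTranspose_mul_self X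
  have hev : ∀ i, 0 ≤ h.eigenvalues i := fun i => hps.eigenvalues_nonneg i
  have hspec : Xᵀ * X = U * Matrix.diagonal h.eigenvalues * Uᵀ := by
    have := h.spectral_theorem
    rw [Unitary.conjStarAlgAut_apply] at this
    rw [← Matrix.conjTranspose_eq_transpose_of_trivial, hU, ← star_eq_transpose_real]
    exact this
  set d : n → ℝ := fun i => if h.eigenvalues i = 0 then 0 else (Real.sqrt (h.eigenvalues i))⁻¹
    with hd
  set S : Matrix n n ℝ := U * Matrix.diagonal d * Uᵀ with hS
  have hSsymm : Sᵀ = S := by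
    rw [hS]
    simp [Matrix.transpose_mul, Matrix.diagonal_transpose, Matrix.mul_assoc]
  set e : n → ℝ := fun i => d i * h.eigenvalues i * d i with he
  have he0 : ∀ i, 0 ≤ e i := by
    intro i
    rw [he, hd]
    dsimp only
    split_ifs with hz
    · simp
    · exact mul_nonneg (mul_nonneg (inv_nonneg.2 (Real.sqrt_nonneg _)) (hev i))
        (inv_nonneg.2 (Real.sqrt_nonneg _))
  have he1 : ∀ i, e i ≤ 1 := by
    intro i
    rw [he, hd]
    dsimp only
    split_ifs with hz
    · simp
    · have hpos : 0 < h.eigenvalues i := lt_of_le_of_ne (hev i) (Ne.symm hz)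
      have hs : Real.sqrt (h.eigenvalues i) ≠ 0 := by positivity
      rw [← Real.mul_self_sqrt (hev i)]
      field_simp
      rw [Real.sqrt_sq (Real.sqrt_nonneg _)]
  refine ⟨X * S, ?_, ?_⟩
  · intro x
    have hQtQ : (X * S)ᵀ * (X * S) = U * Matrix.diagonal e * Uᵀ := by
      rw [Matrix.transpose_mul, hSsymm, Matrix.mul_assoc S Xᵀ (X * S),
        ← Matrix.mul_assoc Xᵀ X S, ← Matrix.mul_assoc S (Xᵀ * X) S, hspec, hS,
        conj_conj U hU2, conj_conj U hU2]
    rw [dot_self_mulVec, hQtQ]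
    set y : n → ℝ := Uᵀ *ᵥ x with hy
    have hxy : x ⬝ᵥ ((U * Matrix.diagonal e * Uᵀ) *ᵥ x)
        = y ⬝ᵥ (Matrix.diagonal e *ᵥ y) := by
      rw [← Matrix.mulVec_mulVec, ← Matrix.mulVec_mulVec, Matrix.dotProduct_mulVec x U,
        hy]
      congr 1
      rw [← Matrix.transpose_transpose U, Matrix.vecMul_transpose, Matrix.transpose_transpose]
    have hyy : y ⬝ᵥ y = x ⬝ᵥ x := by
      rw [hy, dot_self_mulVec, Matrix.transpose_transpose, hU1, Matrix.one_mulVec]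
    rw [hxy, ← hyy]
    have hdiagv : ∀ i, (Matrix.diagonal e *ᵥ y) i = e i * y i := fun i => by
      simp [Matrix.mulVec, dotProduct, Matrix.diagonal_apply, ite_mul]
    unfold dotProduct
    apply Finset.sum_le_sum
    intro i _
    rw [hdiagv i]
    calc y i * (e i * y i) = e i * (y i * y i) := by ring
      _ ≤ 1 * (y i * y i) := mul_le_mul_of_nonneg_right (he1 i) (mul_self_nonneg _)
      _ = y i * y i := one_mul _
  · have hQtX : (X * S)ᵀ * X = U * Matrix.diagonal (fun i => d i * h.eigenvalues i) * Uᵀ := by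
      rw [Matrix.transpose_mul, hSsymm, Matrix.mul_assoc S Xᵀ X, hspec, hS,
        conj_conj U hU2]
    rw [hQtX, Matrix.trace_mul_cycle, hU2, Matrix.one_mul, Matrix.trace_diagonal]
    refine Finset.sum_congr rfl fun i _ => ?_
    rw [hd]
    dsimp only
    split_ifs with hz
    · rw [zero_mul, hz, Real.sqrt_zero]
    · have hpos : 0 < h.eigenvalues i := lt_of_le_of_ne (hev i) (Ne.symm hz)
      have hs : Real.sqrt (h.eigenvalues i) ≠ 0 := by positivity
      field_simp
      rw [Real.sq_sqrt (hev i)]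

/-- For a real matrix `X` whose columns are partitioned into finitely many blocks `X_v`
(columns indexed by a sigma type), the sum of the nuclear norms of the blocks minus the
nuclear norm of the full matrix is nonnegative. -/
theorem sum_nuclearNorm_blocks_sub_nuclearNorm_nonneg
    {m V : Type*} {n : V → Type*} [Fintype m] [Fintype V] [DecidableEq V]
    [∀ v, Fintype (n v)] [∀ v, DecidableEq (n v)]
    (X : Matrix m (Σ v, n v) ℝ) :
    0 ≤ (∑ v, nuclearNorm (X.submatrix id (Sigma.mk v))) - nuclearNorm X := by
  obtain ⟨Q, hQ, hTr⟩ := exists_dual X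
  rw [sub_nonneg]
  have htrace_split : (Qᵀ * X).trace
      = ∑ v, ((Q.submatrix id (Sigma.mk v))ᵀ * (X.submatrix id (Sigma.mk v))).trace := by
    rw [Matrix.trace, ← Finset.univ_sigma_univ, Finset.sum_sigma]
    refine Finset.sum_congr rfl fun v _ => ?_
    rw [Matrix.trace]
    refine Finset.sum_congr rfl fun j _ => ?_
    simp [Matrix.diag_apply, Matrix.mul_apply, Matrix.transpose_apply, Matrix.submatrix_apply]
  have hblock : ∀ v, ∀ x : n v → ℝ,
      ((Q.submatrix id (Sigma.mk v)) *ᵥ x) ⬝ᵥ ((Q.submatrix id (Sigma.mk v)) *ᵥ x)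
        ≤ x ⬝ᵥ x := by
    intro v x
    set xt : (Σ w, n w) → ℝ := fun p => Pi.single (M := fun w => n w → ℝ) v x p.1 p.2 with hxt
    have hmv : (Q.submatrix id (Sigma.mk v)) *ᵥ x = Q *ᵥ xt := by
      funext i
      have h1 : (Q *ᵥ xt) i
          = ∑ w, ∑ j, Q i ⟨w, j⟩ * Pi.single (M := fun w => n w → ℝ) v x w j := by
        simp only [Matrix.mulVec, dotProduct, hxt]
        rw [← Finset.univ_sigma_univ, Finset.sum_sigma]
      rw [h1, Finset.sum_eq_single v
        (fun w _ hw => by simp [Pi.single_eq_of_ne hw])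
        (fun habs => absurd (Finset.mem_univ v) habs)]
      simp [Matrix.mulVec, dotProduct, Matrix.submatrix_apply]
    have hxx : xt ⬝ᵥ xt = x ⬝ᵥ x := by
      have h1 : xt ⬝ᵥ xt
          = ∑ w, ∑ j, (Pi.single (M := fun w => n w → ℝ) v x w j)
              * (Pi.single (M := fun w => n w → ℝ) v x w j) := by
        simp only [dotProduct, hxt]
        rw [← Finset.univ_sigma_univ, Finset.sum_sigma]
      rw [h1, Finset.sum_eq_single v
        (fun w _ hw => by simp [Pi.single_eq_of_ne hw])
        (fun habs => absurd (Finset.mem_univ v) habs)]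
      simp [dotProduct]
    rw [hmv, ← hxx]
    exact hQ xt
  calc nuclearNorm X = (Qᵀ * X).trace := hTr.symm
    _ = ∑ v, ((Q.submatrix id (Sigma.mk v))ᵀ * (X.submatrix id (Sigma.mk v))).trace :=
        htrace_split
    _ ≤ ∑ v, nuclearNorm (X.submatrix id (Sigma.mk v)) :=
        Finset.sum_le_sum fun v _ =>
          trace_transpose_mul_le_nuclearNorm0 _ _ (hblock v)
end
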